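/- arXiv:2501.03175 — 7 statements merged into one kernel-verified Lean document; each statement's English description precedes it below -/
import Mathlib

section
/- Let f: {0,1}^n → {0,1}^n be a Boolean network whose state transition graph consists of a single fixed point together with transient states all feeding into it via one path visiting every configuration (Hamiltonian of maximum height: there is z with z, f(z), ..., f^{2^n−1}(z) all distinct and f^{2^n−1}(z) a fixed point). Then the interaction graph G(f) is strongly connected. -/
def flipBit {n : ℕ} (x : Fin n → Bool) (i : Fin n) : Fin n → Bool :=
  Function.update x i (!(x i))

/-- Arc `(i,j)` of the interaction graph: `f_j` depends on `x_i`. -/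
def Dep {n : ℕ} (f : (Fin n → Bool) → (Fin n → Bool)) (i j : Fin n) : Prop :=
  ∃ x : Fin n → Bool, f x j ≠ f (flipBit x i) j

/-- Projection of a state to the coordinates in `S`. -/
def proj {n : ℕ} (S : Finset (Fin n)) (x : Fin n → Bool) : S → Bool := fun i => x i.1

lemma dep_flip {n : ℕ} {f : (Fin n → Bool) → (Fin n → Bool)} {i j : Fin n}
    (h : ¬ Dep f i j) (x : Fin n → Bool) : f x j = f (flipBit x i) j := by
  by_contra hc; exact h ⟨x, hc⟩

/-- If no coordinate outside `S` influences a coordinate of `S`, then `f` restricted to `S`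
depends only on the coordinates in `S`. -/
lemma insens_aux {n : ℕ} {f : (Fin n → Bool) → (Fin n → Bool)} {S : Finset (Fin n)}
    (hclosed : ∀ i j, i ∉ S → j ∈ S → ¬ Dep f i j) :
    ∀ (D : Finset (Fin n)) (x x' : Fin n → Bool),
      (∀ i, x i ≠ x' i → i ∈ D) → (∀ i ∈ D, i ∉ S) →
      ∀ j ∈ S, f x j = f x' j := by
  classical
  intro D
  induction D using Finset.induction with
  | empty =>
    intro x x' hd _ j _
    have hxx : x = x' := funext fun i => by
      by_contra hne; exact absurd (hd i hne) (Finset.notMem_empty i)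
    rw [hxx]
  | @insert a D' ha ih =>
    intro x x' hd hDS j hj
    set x'' := Function.update x a (x' a) with hx''
    have h1 : f x j = f x'' j := by
      by_cases hxa : x a = x' a
      · rw [hx'', ← hxa, Function.update_eq_self]
      · have hba : x' a = !(x a) := by
          cases hb : x a <;> cases hb' : x' a <;> simp_all
        have hflip : x'' = flipBit x a := by
          rw [hx'', hba]; rfl
        rw [hflip]
        exact dep_flip (hclosed a j (hDS a (Finset.mem_insert_self a D')) hj) x
    have h2 : f x'' j = f x' j := by
      apply ih x'' x'
      · intro i hne
        by_cases hia : i = a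
        · subst hia
          simp [hx'', Function.update_self] at hne
        · have hxi : x i ≠ x' i := by
            simpa [hx'', Function.update_of_ne hia] using hne
          rcases Finset.mem_insert.mp (hd i hxi) with h | h
          · exact absurd h hia
          · exact h
      · intro i hi; exact hDS i (Finset.mem_insert_of_mem hi)
      · exact hj
    rw [h1, h2]

lemma insens {n : ℕ} {f : (Fin n → Bool) → (Fin n → Bool)} {S : Finset (Fin n)}
    (hclosed : ∀ i j, i ∉ S → j ∈ S → ¬ Dep f i j)
    {x x' : Fin n → Bool} (h : ∀ i ∈ S, x i = x' i) :
    ∀ j ∈ S, f x j = f x' j := by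
  classical
  apply insens_aux hclosed (Finset.univ.filter (· ∉ S))
  · intro i hne
    simp only [Finset.mem_filter, Finset.mem_univ, true_and]
    intro hiS; exact hne (h i hiS)
  · intro i hi
    simpa using (Finset.mem_filter.mp hi).2

/-- Main combinatorial lemma: any nonempty set of coordinates closed under incoming
dependencies must be everything. -/
lemma key {n : ℕ} (f : (Fin n → Bool) → (Fin n → Bool)) (z : Fin n → Bool)
    (hdist : ∀ a b : ℕ, a < 2 ^ n → b < 2 ^ n → f^[a] z = f^[b] z → a = b)
    (hfix : f (f^[2 ^ n - 1] z) = f^[2 ^ n - 1] z)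
    (S : Finset (Fin n)) (hne : S.Nonempty)
    (hclosed : ∀ i j, i ∉ S → j ∈ S → ¬ Dep f i j) :
    S = Finset.univ := by
  classical
  by_contra hSU
  set s := S.card with hs
  have hslt : s < n := by
    have h1 : S ⊂ Finset.univ := Finset.ssubset_univ_iff.mpr hSU
    have := Finset.card_lt_card h1
    simpa using this
  -- trajectory
  set y : ℕ → (S → Bool) := fun k => proj S (f^[k] z) with hy
  -- the trajectory visits everything
  have hinjOn : Set.InjOn (fun k => f^[k] z) (Finset.range (2^n)) := by
    intro a ha b hb hab
    exact hdist a b (Finset.mem_range.mp ha) (Finset.mem_range.mp hb) hab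
  have hcardfun : Fintype.card (Fin n → Bool) = 2 ^ n := by simp
  have himg : (Finset.range (2^n)).image (fun k => f^[k] z) = Finset.univ := by
    apply Finset.eq_univ_of_card
    rw [Finset.card_image_of_injOn hinjOn, Finset.card_range, hcardfun]
  -- fibers of proj have the expected cardinality
  have hfiber : ∀ v : S → Bool,
      (Finset.univ.filter (fun x : Fin n → Bool => proj S x = v)).card = 2 ^ (n - s) := by
    intro v
    have e : {x : Fin n → Bool // proj S x = v} ≃ ({i : Fin n // i ∉ S} → Bool) :=
      { toFun := fun x i => x.1 i.1
        invFun := fun u => ⟨fun i => if h : i ∈ S then v ⟨i, h⟩ else u ⟨i, h⟩, by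
          funext i
          simp [proj, i.2]⟩
        left_inv := by
          rintro ⟨x, hx⟩
          ext i
          by_cases h : i ∈ S
          · simp only [h, dif_pos]
            exact (congrFun hx ⟨i, h⟩).symm
          · simp [h]
        right_inv := by
          intro u; funext i
          simp [i.2] }
    have h1 : Fintype.card {x : Fin n → Bool // proj S x = v} = 2 ^ (n - s) := by
      rw [Fintype.card_congr e, Fintype.card_fun]
      simp [Fintype.card_subtype_compl, Fintype.card_coe, hs]
    rw [← h1, Fintype.card_subtype]
  -- count of each value along the trajectory
  have hcount : ∀ v : S → Bool,
      ((Finset.range (2^n)).filter (fun k => y k = v)).card = 2 ^ (n - s) := by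
    intro v
    rw [← hfiber v, ← himg, Finset.filter_image]
    have hmono' : ((Finset.range (2^n)).filter fun a => proj S (f^[a] z) = v : Set ℕ)
        ⊆ (Finset.range (2^n) : Set ℕ) := by
      intro k hk
      simpa using (Finset.mem_filter.mp hk).1
    rw [Finset.card_image_of_injOn (hinjOn.mono hmono')]
  -- the eventual fixed value
  have hex : ∃ k, y k = y (2^n - 1) := ⟨2^n - 1, rfl⟩
  set k0 := Nat.find hex with hk0
  have hk0spec : y k0 = y (2^n - 1) := Nat.find_spec hex
  have hk0min : ∀ k < k0, y k ≠ y (2^n - 1) := fun k hk => Nat.find_min hex hk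
  -- determinism of the projected trajectory
  have hstep : ∀ a b : ℕ, y a = y b → y (a+1) = y (b+1) := by
    intro a b hab
    funext j
    have hagree : ∀ i ∈ S, f^[a] z i = f^[b] z i := fun i hi => congrFun hab ⟨i, hi⟩
    have h := insens hclosed hagree j.1 j.2
    simp only [hy, proj]
    rw [Function.iterate_succ_apply', Function.iterate_succ_apply']
    exact h
  -- once at the fixed value, stay there
  have hmono : ∀ t, y (k0 + t) = y (2^n - 1) := by
    intro t
    induction t with
    | zero => exact hk0spec
    | succ t ih =>
      have h2 := hstep _ _ ih
      have h3 : y (2^n - 1 + 1) = y (2^n - 1) := by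
        simp only [hy, proj]
        rw [Function.iterate_succ_apply', hfix]
      rw [show k0 + (t+1) = (k0 + t) + 1 from rfl, h2, h3]
  -- the trajectory is injective before k0
  have hdistinct : ∀ a b : ℕ, a < b → b < k0 → y a ≠ y b := by
    intro a b hab hbk0 hyab
    have hshift : ∀ t, y (a + t) = y (b + t) := by
      intro t
      induction t with
      | zero => simpa using hyab
      | succ t ih =>
        exact hstep _ _ ih
    have h1 : y (a + (k0 - b)) = y k0 := by
      have := hshift (k0 - b)
      rwa [Nat.add_sub_cancel' (le_of_lt hbk0)] at this
    have h2 : a + (k0 - b) < k0 := by omega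
    exact hk0min _ h2 (h1.trans hk0spec)
  -- construct a value different from the fixed one
  obtain ⟨i1, hi1⟩ := hne
  set v : S → Bool := Function.update (y (2^n - 1)) ⟨i1, hi1⟩ (!(y (2^n - 1) ⟨i1, hi1⟩))
    with hv
  have hvne : v ≠ y (2^n - 1) := by
    intro h
    have := congrFun h ⟨i1, hi1⟩
    simp [hv] at this
  -- wherever the value v occurs, it is before k0
  have hsub : (Finset.range (2^n)).filter (fun k => y k = v) ⊆ Finset.range k0 := by
    intro k hk
    have hk2 := (Finset.mem_filter.mp hk).2
    simp only [Finset.mem_range]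
    by_contra h
    push_neg at h
    obtain ⟨t, rfl⟩ := Nat.exists_eq_add_of_le h
    exact hvne (hk2.symm.trans (hmono t))
  -- v occurs at least twice
  have hcard2 : 2 ≤ ((Finset.range (2^n)).filter (fun k => y k = v)).card := by
    rw [hcount v]
    have h1 : 1 ≤ n - s := by omega
    calc (2:ℕ) = 2^1 := rfl
      _ ≤ 2^(n-s) := Nat.pow_le_pow_right (by norm_num) h1
  obtain ⟨a, ha, b, hb, hab⟩ := Finset.one_lt_card.mp (lt_of_lt_of_le one_lt_two hcard2)
  have hya : y a = v := (Finset.mem_filter.mp ha).2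
  have hyb : y b = v := (Finset.mem_filter.mp hb).2
  have haK : a < k0 := Finset.mem_range.mp (hsub ha)
  have hbK : b < k0 := Finset.mem_range.mp (hsub hb)
  rcases hab.lt_or_gt with h | h
  · exact hdistinct a b h hbK (hya.trans hyb.symm)
  · exact hdistinct b a h haK (hyb.trans hya.symm)

/-- A Hamiltonian Boolean network of maximum height has a strongly connected
interaction graph. -/
theorem stmt4 {n : ℕ} (f : (Fin n → Bool) → (Fin n → Bool))
    (z : Fin n → Bool)
    (hdist : ∀ a b : ℕ, a < 2 ^ n → b < 2 ^ n → f^[a] z = f^[b] z → a = b)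
    (hfix : f (f^[2 ^ n - 1] z) = f^[2 ^ n - 1] z) :
    ∀ i j : Fin n, Relation.ReflTransGen (Dep f) i j := by
  classical
  intro i j
  set S : Finset (Fin n) :=
    Finset.univ.filter (fun i => Relation.ReflTransGen (Dep f) i j) with hS
  have hjS : j ∈ S := by
    simp only [hS, Finset.mem_filter, Finset.mem_univ, true_and]
    exact Relation.ReflTransGen.refl
  have hclosed : ∀ i' j', i' ∉ S → j' ∈ S → ¬ Dep f i' j' := by
    intro i' j' hi' hj' hdep
    apply hi'
    simp only [hS, Finset.mem_filter, Finset.mem_univ, true_and] at hj' ⊢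
    exact Relation.ReflTransGen.head hdep hj'
  have huniv := key f z hdist hfix S ⟨j, hjS⟩ hclosed
  have hiS : i ∈ S := huniv ▸ Finset.mem_univ i
  simpa [hS] using hiS
end

section
/- Let f: {0,1}^n → {0,1}^n be a Hamiltonian cycle Boolean network (a cyclic permutation of {0,1}^n of order 2^n) and I ⊆ [n] nonempty. Then f is self-dual in I if and only if f^{2^{n−1}}(x) = ¬_I(x) for every x ∈ {0,1}^n. -/
def negOn {n : ℕ} (I : Finset (Fin n)) (x : Fin n → Bool) : Fin n → Bool :=
  fun k => if k ∈ I then !(x k) else x k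

lemma negOn_negOn {n : ℕ} (I : Finset (Fin n)) (x : Fin n → Bool) :
    negOn I (negOn I x) = x := by
  funext k; simp only [negOn]; split <;> simp

lemma negOn_ne {n : ℕ} (I : Finset (Fin n)) (hI : I.Nonempty) (x : Fin n → Bool) :
    negOn I x ≠ x := by
  obtain ⟨i, hi⟩ := hI
  intro h
  have := congrFun h i
  simp [negOn, hi] at this

/-- A Hamiltonian cycle Boolean network is self-dual in `I` iff its
`2^(n-1)`-th iterate is the negation on `I`. -/
theorem stmt6 {n : ℕ} (f : (Fin n → Bool) → (Fin n → Bool))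
    (hham : ∀ x : Fin n → Bool, IsLeast {k : ℕ | 0 < k ∧ f^[k] x = x} (2 ^ n))
    (I : Finset (Fin n)) (hI : I.Nonempty) :
    (∀ x : Fin n → Bool, f x = negOn I (f (negOn I x))) ↔
      (∀ x : Fin n → Bool, f^[2 ^ (n - 1)] x = negOn I x) := by
  have hn : 1 ≤ n := hI.choose.pos
  have hpow : 2 ^ (n - 1) + 2 ^ (n - 1) = 2 ^ n := by
    rw [← two_mul, ← pow_succ', Nat.sub_add_cancel hn]
  have hfix : ∀ y, f^[2 ^ n] y = y := fun y => (hham y).1.2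
  constructor
  · intro h x
    have hcomm : ∀ y, negOn I (f y) = f (negOn I y) := by
      intro y
      have := h (negOn I y)
      rw [negOn_negOn] at this
      rw [this]
    have hit : ∀ k y, f^[k] (negOn I y) = negOn I (f^[k] y) := by
      intro k
      induction k with
      | zero => intro y; simp
      | succ k ih =>
        intro y
        rw [Function.iterate_succ_apply, ← hcomm, ih, ← Function.iterate_succ_apply]
    have key : ∀ i j : ℕ, i < j → j < 2 ^ n → f^[i] x = f^[j] x → False := by
      intro i j hij hj he
      have h1 : f^[j - i] (f^[i] x) = f^[i] x := by
        rw [← Function.iterate_add_apply, Nat.sub_add_cancel hij.le, ← he]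
      have h2 := (hham (f^[i] x)).2 ⟨Nat.sub_pos_of_lt hij, h1⟩
      omega
    have hinj : Function.Injective (fun k : Fin (2 ^ n) => f^[(k : ℕ)] x) := by
      intro i j hij
      rcases lt_trichotomy i j with h' | h' | h'
      · exact absurd hij (fun he => key i j h' j.isLt he)
      · exact h'
      · exact absurd hij.symm (fun he => key j i h' i.isLt he)
    have hcard : Fintype.card (Fin (2 ^ n)) = Fintype.card (Fin n → Bool) := by
      simp [Fintype.card_fun]
    have hsurj : Function.Surjective (fun k : Fin (2 ^ n) => f^[(k : ℕ)] x) :=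
      ((Fintype.bijective_iff_injective_and_card _).2 ⟨hinj, hcard⟩).surjective
    obtain ⟨⟨k, hk⟩, hke⟩ := hsurj (negOn I x)
    simp only at hke
    have hk0 : 0 < k := by
      rcases Nat.eq_zero_or_pos k with h0 | h0
      · subst h0
        simp only [Function.iterate_zero, id_eq] at hke
        exact absurd hke.symm (negOn_ne I hI x)
      · exact h0
    have h2k : f^[k + k] x = x := by
      rw [Function.iterate_add_apply, hke, hit, hke, negOn_negOn]
    have hge : 2 ^ n ≤ k + k := (hham x).2 ⟨by omega, h2k⟩
    have hk'aux : f^[2 ^ n - k] (negOn I x) = x := by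
      rw [← hke, ← Function.iterate_add_apply, Nat.sub_add_cancel hk.le, hfix]
    have hk' : f^[2 ^ n - k] x = negOn I x := by
      conv_lhs => rw [← negOn_negOn I x]
      rw [hit, hk'aux]
    have h2k' : f^[(2 ^ n - k) + (2 ^ n - k)] x = x := by
      rw [Function.iterate_add_apply, hk', hit, hk', negOn_negOn]
    have hge' : 2 ^ n ≤ (2 ^ n - k) + (2 ^ n - k) := (hham x).2 ⟨by omega, h2k'⟩
    have : 2 ^ (n - 1) = k := by omega
    rw [this]; exact hke
  · intro h x
    rw [← h x, ← h (f (f^[2 ^ (n - 1)] x)), ← Function.iterate_succ_apply' f (2 ^ (n - 1)) x,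
      ← Function.iterate_add_apply,
      show 2 ^ (n - 1) + (2 ^ (n - 1) + 1) = 1 + 2 ^ n by omega,
      Function.iterate_add_apply, hfix, Function.iterate_one]
end

section
/- Let f: {0,1}^n → {0,1}^n be a Boolean network with n ≥ 3, and let i, j ∈ [n]. Suppose |T(f_j)| is divisible by 4 and nonempty, and that there exists a ∈ {0,1} such that |{x ∈ T(f_j) : x_i = a}| is odd. Then f_j depends on all n variables. -/
lemma flipBit_flip_flip {n : ℕ} (x : Fin n → Bool) (k : Fin n) :
    flipBit (flipBit x k) k = x := by
  funext m
  by_cases h : m = k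
  · subst h; simp [flipBit]
  · simp [flipBit, Function.update_of_ne h]

lemma flip_apply_self {n : ℕ} (x : Fin n → Bool) (k : Fin n) :
    flipBit x k k = !(x k) := by simp [flipBit]

lemma flip_apply_ne {n : ℕ} (x : Fin n → Bool) (k m : Fin n) (h : m ≠ k) :
    flipBit x k m = x m := by simp [flipBit, Function.update_of_ne h]

lemma card_eq_of_flip {n : ℕ} (p q : (Fin n → Bool) → Prop)
    [DecidablePred p] [DecidablePred q] (k : Fin n)
    (hpq : ∀ x, p x → q (flipBit x k)) (hqp : ∀ x, q x → p (flipBit x k)) :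
    (Finset.univ.filter p).card = (Finset.univ.filter q).card := by
  apply Finset.card_bij (fun x _ => flipBit x k)
  · intro x hx
    simp only [Finset.mem_filter, Finset.mem_univ, true_and] at hx ⊢
    exact hpq x hx
  · intro x hx y hy hxy
    have := congrArg (fun z => flipBit z k) hxy
    simpa [flipBit_flip_flip] using this
  · intro y hy
    simp only [Finset.mem_filter, Finset.mem_univ, true_and] at hy
    exact ⟨flipBit y k, by
      simp only [Finset.mem_filter, Finset.mem_univ, true_and]
      exact hqp y hy, flipBit_flip_flip y k⟩

lemma even_card_of_flip {n : ℕ} (p : (Fin n → Bool) → Prop)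
    [DecidablePred p] (k : Fin n) (hp : ∀ x, p x → p (flipBit x k)) :
    Even (Finset.univ.filter p).card := by
  have hsplit :
      ((Finset.univ.filter p).filter (fun x => x k = true)).card +
      ((Finset.univ.filter p).filter (fun x => ¬ x k = true)).card
        = (Finset.univ.filter p).card :=
    Finset.card_filter_add_card_filter_not _
  have heq : ((Finset.univ.filter p).filter (fun x => x k = true)).card =
      ((Finset.univ.filter p).filter (fun x => ¬ x k = true)).card := by
    rw [Finset.filter_filter, Finset.filter_filter]
    apply card_eq_of_flip _ _ k
    · intro x hx
      refine ⟨hp x hx.1, ?_⟩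
      rw [flip_apply_self]; simp [hx.2]
    · intro x hx
      refine ⟨hp x hx.1, ?_⟩
      rw [flip_apply_self]; simp at hx ⊢; simp [hx.2]
  rw [← hsplit, ← heq]
  exact ⟨_, rfl⟩

/-- If `|T(f_j)|` is a nonzero multiple of four and some half
`T(f_j, x_i = a)` has odd cardinality, then `f_j` depends on all variables. -/
theorem stmt8 {n : ℕ} (hn : 3 ≤ n) (f : (Fin n → Bool) → (Fin n → Bool))
    (i j : Fin n)
    (h4 : 4 ∣ (Finset.univ.filter (fun x : Fin n → Bool => f x j = true)).card)
    (hne : (Finset.univ.filter (fun x : Fin n → Bool => f x j = true)).Nonempty)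
    (hodd : ∃ a : Bool, Odd (Finset.univ.filter
      (fun x : Fin n → Bool => f x j = true ∧ x i = a)).card) :
    ∀ k : Fin n, ∃ x : Fin n → Bool, f x j ≠ f (flipBit x k) j := by
  intro k
  by_contra hcon
  push_neg at hcon
  obtain ⟨a, ha⟩ := hodd
  have hinv : ∀ x : Fin n → Bool, f x j = true → f (flipBit x k) j = true := by
    intro x hx; rw [← hcon x]; exact hx
  by_cases hk : k = i
  · -- flip on i gives a bijection between the two halves; total ≡ 2 mod 4
    subst hk
    have heq : (Finset.univ.filter
        (fun x : Fin n → Bool => f x j = true ∧ x k = a)).card =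
        (Finset.univ.filter
        (fun x : Fin n → Bool => f x j = true ∧ ¬ x k = a)).card := by
      apply card_eq_of_flip _ _ k
      · rintro x ⟨h1, h2⟩
        refine ⟨hinv x h1, ?_⟩
        rw [flip_apply_self, h2]
        cases a <;> simp
      · rintro x ⟨h1, h2⟩
        refine ⟨hinv x h1, ?_⟩
        rw [flip_apply_self]
        cases a <;> cases h : x k <;>
          simp only [h, Bool.not_true, Bool.not_false] <;>
          first | rfl | exact absurd h h2
    have hsplit :
        ((Finset.univ.filter (fun x : Fin n → Bool => f x j = true)).filter
          (fun x => x k = a)).card +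
        ((Finset.univ.filter (fun x : Fin n → Bool => f x j = true)).filter
          (fun x => ¬ x k = a)).card
          = (Finset.univ.filter (fun x : Fin n → Bool => f x j = true)).card :=
      Finset.card_filter_add_card_filter_not _
    simp only [Finset.filter_filter] at hsplit
    obtain ⟨m, hm⟩ := h4
    obtain ⟨c, hc⟩ := ha
    have key : 4 * m = 2 * c + 1 + (2 * c + 1) := by
      rw [← hm, ← hsplit, ← heq, hc]
    clear * - key
    omega
  · -- k ≠ i: the half with x i = a is closed under flip k, so even, contradiction
    have heven : Even (Finset.univ.filter
        (fun x : Fin n → Bool => f x j = true ∧ x i = a)).card := by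
      apply even_card_of_flip _ k
      rintro x ⟨h1, h2⟩
      exact ⟨hinv x h1, by rw [flip_apply_ne x k i (Ne.symm hk)]; exact h2⟩
    exact (Nat.not_odd_iff_even.mpr heven) ha
end

section
/- Let f: {0,1}^n → {0,1}^n (n ∈ ℕ, n ≠ 2) be a Hamiltonian cycle Boolean network that is self-dual in I ⊆ [n]. Then every coordinate j ∈ I has in-degree n in the interaction graph, i.e., f_j depends on all n variables. -/
lemma flipBit_apply_self {n : ℕ} (x : Fin n → Bool) (i : Fin n) :
    flipBit x i i = !(x i) := by simp [flipBit]

lemma flipBit_apply_ne {n : ℕ} (x : Fin n → Bool) {i k : Fin n} (h : k ≠ i) :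
    flipBit x i k = x k := by simp [flipBit, Function.update_of_ne h]

lemma flipBit_flipBit {n : ℕ} (x : Fin n → Bool) (i : Fin n) :
    flipBit (flipBit x i) i = x := by
  funext k
  by_cases h : k = i
  · subst h; simp [flipBit]
  · rw [flipBit_apply_ne _ h, flipBit_apply_ne _ h]

lemma flipBit_inj {n : ℕ} {x y : Fin n → Bool} {i : Fin n}
    (h : flipBit x i = flipBit y i) : x = y := by
  have := congrArg (fun z => flipBit z i) h
  simpa [flipBit_flipBit] using this

lemma negOn_apply_mem {n : ℕ} {I : Finset (Fin n)} (x : Fin n → Bool) {k : Fin n}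
    (h : k ∈ I) : negOn I x k = !(x k) := by simp [negOn, h]

lemma cast_eq_one_odd {k : ℕ} (h : (k : ZMod 2) = 1) : k % 2 = 1 := by
  have h2 : ((k % 2 : ℕ) : ZMod 2) = 1 := by rw [ZMod.natCast_mod]; exact h
  have hlt : k % 2 < 2 := Nat.mod_lt _ (by norm_num)
  interval_cases h : (k % 2)
  · simp at h2
  · rfl

lemma pow_two_odd_eq_zero {a : ℕ} (h : 2 ^ a % 2 = 1) : a = 0 := by
  cases a with
  | zero => rfl
  | succ b => exfalso; rw [pow_succ] at h; omega

/-- In a Hamiltonian cycle Boolean network that is self-dual in `I` (n ≠ 2),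
every coordinate of `I` depends on all `n` variables. -/
theorem stmt9 {n : ℕ} (hn : n ≠ 2) (f : (Fin n → Bool) → (Fin n → Bool))
    (hham : ∀ x : Fin n → Bool, IsLeast {k : ℕ | 0 < k ∧ f^[k] x = x} (2 ^ n))
    (I : Finset (Fin n))
    (hsd : ∀ x : Fin n → Bool, f (negOn I x) = negOn I (f x)) :
    ∀ j ∈ I, ∀ i : Fin n, ∃ x : Fin n → Bool, f x j ≠ f (flipBit x i) j := by
  intro j hj i
  by_contra hcon
  push_neg at hcon
  set N := 2 ^ n with hN
  have hN1 : 1 ≤ N := Nat.one_le_two_pow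
  have hper : ∀ x, f^[N] x = x := fun x => (hham x).1.2
  have hlow : ∀ x, ∀ k, 0 < k → f^[k] x = x → N ≤ k := fun x k hk he => (hham x).2 ⟨hk, he⟩
  have hNsub : N - 1 + 1 = N := by omega
  -- f is bijective
  have hfbij : Function.Bijective f := by
    constructor
    · intro a b hab
      have h1 : f^[N-1] (f a) = f^[N-1] (f b) := by rw [hab]
      have ea := Function.iterate_succ_apply f (N-1) a
      have eb := Function.iterate_succ_apply f (N-1) b
      rw [Nat.succ_eq_add_one, hNsub] at ea
      rw [Nat.succ_eq_add_one, hNsub] at eb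
      rw [← ea, ← eb, hper, hper] at h1
      exact h1
    · intro y
      refine ⟨f^[N-1] y, ?_⟩
      have e := Function.iterate_succ_apply' f (N-1) y
      rw [Nat.succ_eq_add_one, hNsub] at e
      rw [← e, hper]
  -- orbit of x₀
  set x₀ : Fin n → Bool := fun _ => false with hx₀
  have horb : ∀ a b : ℕ, a < N → b < N → f^[a] x₀ = f^[b] x₀ → a = b := by
    have key : ∀ a b : ℕ, a ≤ b → b < N → f^[a] x₀ = f^[b] x₀ → a = b := by
      intro a b hab hb he
      have hc : f^[b - a] x₀ = x₀ := by
        have h1 : f^[a] (f^[b-a] x₀) = f^[a] x₀ := by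
          rw [← Function.iterate_add_apply, Nat.add_sub_cancel' hab]
          exact he.symm
        exact Function.Injective.iterate hfbij.1 a h1
      by_contra hne
      have hpos : 0 < b - a := by omega
      have := hlow x₀ (b-a) hpos hc
      omega
    intro a b ha hb he
    rcases le_total a b with h | h
    · exact key a b h hb he
    · exact (key b a h ha he.symm).symm
  have hebij : Function.Bijective (fun t : Fin N => f^[t.1] x₀) := by
    rw [Fintype.bijective_iff_injective_and_card]
    constructor
    · intro a b h
      exact Fin.ext (horb a b a.2 b.2 h)
    · simp [hN]
  -- negOn commutes with iterates of f
  have hcomm : ∀ (t : ℕ) (y : Fin n → Bool), negOn I (f^[t] y) = f^[t] (negOn I y) := by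
    intro t y
    induction t with
    | zero => simp
    | succ t ih =>
      rw [Function.iterate_succ_apply', Function.iterate_succ_apply', ← hsd, ih]
  -- negOn I = f^[m] with m + m = N
  obtain ⟨t0, hm⟩ := hebij.2 (negOn I x₀)
  simp only at hm
  set m := t0.1 with hmdef
  have hmN : m < N := t0.2
  have hm0 : m ≠ 0 := by
    intro h0
    rw [h0] at hm
    have := congrFun hm j
    simp only [Function.iterate_zero, id_eq] at this
    rw [negOn_apply_mem _ hj] at this
    simp [hx₀] at this
  have h2m : f^[m + m] x₀ = x₀ := by
    rw [Function.iterate_add_apply, hm, ← hcomm, hm, negOn_negOn]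
  have hmm : m + m = N := by
    rcases lt_trichotomy (m + m) N with h | h | h
    · have := hlow x₀ (m + m) (by omega) h2m; omega
    · exact h
    · exfalso
      have hr : f^[m + m - N] x₀ = x₀ := by
        have hs : (m + m - N) + N = m + m := by omega
        calc f^[m + m - N] x₀ = f^[m + m - N] (f^[N] x₀) := by rw [hper]
          _ = f^[(m + m - N) + N] x₀ := by rw [Function.iterate_add_apply]
          _ = x₀ := by rw [hs]; exact h2m
      have := hlow x₀ (m + m - N) (by omega) hr
      omega
  have hneg : ∀ y, negOn I y = f^[m] y := by
    intro y
    obtain ⟨t, ht⟩ := hebij.2 y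
    simp only at ht
    rw [← ht, hcomm, ← hm, ← Function.iterate_add_apply, Nat.add_comm,
      Function.iterate_add_apply]
  -- the counting set T
  set T : Finset (Fin n → Bool) :=
    Finset.univ.filter (fun x => x j = false ∧ f x j = true) with hT
  -- |T| is odd
  have hTodd : T.card % 2 = 1 := by
    apply cast_eq_one_odd
    have hsum1 : ∑ x : Fin n → Bool,
        (if x j = false ∧ f x j = true then (1 : ZMod 2) else 0) = (T.card : ZMod 2) := by
      rw [Finset.sum_boole]
    rw [← hsum1]
    rw [← Fintype.sum_bijective _ hebij _ _ (fun t => rfl)]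
    rw [Fin.sum_univ_eq_sum_range
      (fun t => if f^[t] x₀ j = false ∧ f (f^[t] x₀) j = true then (1 : ZMod 2) else 0)]
    rw [← hmm, Finset.sum_range_add]
    have hterm : ∀ t : ℕ,
        ((if f^[t] x₀ j = false ∧ f (f^[t] x₀) j = true then (1 : ZMod 2) else 0)
          + (if f^[m + t] x₀ j = false ∧ f (f^[m + t] x₀) j = true then (1 : ZMod 2) else 0))
        = (if f^[t+1] x₀ j = true then (1 : ZMod 2) else 0)
          - (if f^[t] x₀ j = true then (1 : ZMod 2) else 0) := by
      intro t
      have h1 : f^[m + t] x₀ = negOn I (f^[t] x₀) := by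
        rw [hneg, Function.iterate_add_apply]
      have hy1 : f (f^[t] x₀) = f^[t+1] x₀ := (Function.iterate_succ_apply' f t x₀).symm
      have hnj : negOn I (f^[t] x₀) j = !(f^[t] x₀ j) := negOn_apply_mem _ hj
      have hfnj : f (negOn I (f^[t] x₀)) j = !(f (f^[t] x₀) j) := by
        rw [hsd, negOn_apply_mem _ hj]
      rw [h1]
      rcases hb : f^[t] x₀ j <;> rcases hc : f (f^[t] x₀) j <;>
        simp [hb, hc, hnj, hfnj, ← hy1] <;> decide
    calc ∑ t ∈ Finset.range m,
          (if f^[t] x₀ j = false ∧ f (f^[t] x₀) j = true then (1 : ZMod 2) else 0)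
        + ∑ t ∈ Finset.range m,
          (if f^[m + t] x₀ j = false ∧ f (f^[m + t] x₀) j = true then (1 : ZMod 2) else 0)
        = ∑ t ∈ Finset.range m,
          ((if f^[t+1] x₀ j = true then (1 : ZMod 2) else 0)
            - (if f^[t] x₀ j = true then (1 : ZMod 2) else 0)) := by
          rw [← Finset.sum_add_distrib]
          exact Finset.sum_congr rfl (fun t _ => hterm t)
      _ = (if f^[m] x₀ j = true then (1 : ZMod 2) else 0)
            - (if f^[0] x₀ j = true then (1 : ZMod 2) else 0) :=
          Finset.sum_range_sub (fun t => if f^[t] x₀ j = true then (1 : ZMod 2) else 0) m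
      _ = 1 := by
          rw [hm]
          rw [negOn_apply_mem _ hj]
          simp [hx₀]
  -- now derive the contradiction from hcon
  have hunivcard : (Finset.univ : Finset (Fin n → Bool)).card = N := by
    simp [hN]
  by_cases hij : i = j
  · -- case i = j
    rw [hij] at hcon
    set U : Finset (Fin n → Bool) :=
      Finset.univ.filter (fun x => x j = true ∧ f x j = true) with hU
    have hTU : T.card = U.card := by
      apply Finset.card_bij (fun x _ => flipBit x j)
      · intro a ha
        simp only [hT, hU, Finset.mem_filter, Finset.mem_univ, true_and] at ha ⊢
        refine ⟨by rw [flipBit_apply_self, ha.1]; rfl, by rw [← hcon a]; exact ha.2⟩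
      · intro a _ b _ h; exact flipBit_inj h
      · intro b hb
        refine ⟨flipBit b j, ?_, flipBit_flipBit b j⟩
        simp only [hT, hU, Finset.mem_filter, Finset.mem_univ, true_and] at hb ⊢
        refine ⟨by rw [flipBit_apply_self, hb.1]; rfl, by rw [← hcon b]; exact hb.2⟩
    set W : Finset (Fin n → Bool) :=
      Finset.univ.filter (fun x => f x j = true) with hW
    have hWsplit : T.card + U.card = W.card := by
      have h1 := Finset.card_filter_add_card_filter_not
        (s := W) (p := fun x => x j = false)
      have h2 : W.filter (fun x => x j = false) = T := by
        ext x
        simp only [hT, hW, Finset.mem_filter, Finset.mem_univ, true_and]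
        tauto
      have h3 : W.filter (fun x => ¬ x j = false) = U := by
        ext x
        simp only [hU, hW, Finset.mem_filter, Finset.mem_univ, true_and,
          Bool.not_eq_false]
        tauto
      rw [h2, h3] at h1
      exact h1
    set V : Finset (Fin n → Bool) :=
      Finset.univ.filter (fun y => y j = true) with hV
    have hWV : W.card = V.card := by
      apply Finset.card_bij (fun x _ => f x)
      · intro a ha
        simp only [hW, hV, Finset.mem_filter, Finset.mem_univ, true_and] at ha ⊢
        exact ha
      · intro a _ b _ h; exact hfbij.1 h
      · intro b hb
        obtain ⟨a, rfl⟩ := hfbij.2 b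
        simp only [hW, hV, Finset.mem_filter, Finset.mem_univ, true_and] at hb
        exact ⟨a, by simp [hW, hb], rfl⟩
    have hVhalf : V.card + V.card = N := by
      have h1 := Finset.card_filter_add_card_filter_not
        (s := (Finset.univ : Finset (Fin n → Bool))) (p := fun y => y j = true)
      have h2 : Finset.univ.filter (fun y : Fin n → Bool => ¬ y j = true)
          = Finset.univ.filter (fun y : Fin n → Bool => y j = false) := by
        ext y; simp [Bool.not_eq_true]
      rw [h2, hunivcard] at h1
      have h3 : V.card = (Finset.univ.filter (fun y : Fin n → Bool => y j = false)).card := by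
        apply Finset.card_bij (fun x _ => flipBit x j)
        · intro a ha
          simp only [hV, Finset.mem_filter, Finset.mem_univ, true_and] at ha ⊢
          rw [flipBit_apply_self, ha]; rfl
        · intro a _ b _ h; exact flipBit_inj h
        · intro b hb
          refine ⟨flipBit b j, ?_, flipBit_flipBit b j⟩
          simp only [hV, Finset.mem_filter, Finset.mem_univ, true_and] at hb ⊢
          rw [flipBit_apply_self, hb]; rfl
      rw [h3] at h1 ⊢
      exact h1
    have h4 : 4 * T.card = 2 ^ n := by
      have e1 := hTU; have e2 := hWsplit; have e3 := hWV; have e4 := hVhalf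
      clear_value T U W V
      omega
    have hdvd : T.card ∣ 2 ^ n := ⟨4, by omega⟩
    obtain ⟨a, _, hTa⟩ := (Nat.dvd_prime_pow Nat.prime_two).mp hdvd
    have ha0 : a = 0 := pow_two_odd_eq_zero (hTa ▸ hTodd)
    rw [ha0] at hTa
    simp at hTa
    have hpow : (2 : ℕ) ^ n = 2 ^ 2 := by omega
    exact hn (Nat.pow_right_injective (le_refl 2) hpow)
  · -- case i ≠ j
    have hji : j ≠ i := fun h => hij h.symm
    have hcardeq : (T.filter (fun x => x i = false)).card
        = (T.filter (fun x => x i = true)).card := by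
      apply Finset.card_bij (fun x _ => flipBit x i)
      · intro a ha
        simp only [hT, Finset.mem_filter, Finset.mem_univ, true_and] at ha ⊢
        refine ⟨⟨?_, ?_⟩, ?_⟩
        · rw [flipBit_apply_ne _ hji]; exact ha.1.1
        · rw [← hcon a]; exact ha.1.2
        · rw [flipBit_apply_self, ha.2]; rfl
      · intro a _ b _ h; exact flipBit_inj h
      · intro b hb
        refine ⟨flipBit b i, ?_, flipBit_flipBit b i⟩
        simp only [hT, Finset.mem_filter, Finset.mem_univ, true_and] at hb ⊢
        refine ⟨⟨?_, ?_⟩, ?_⟩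
        · rw [flipBit_apply_ne _ hji]; exact hb.1.1
        · rw [← hcon b]; exact hb.1.2
        · rw [flipBit_apply_self, hb.2]; rfl
    have h1 := Finset.card_filter_add_card_filter_not
      (s := T) (p := fun x => x i = false)
    have h2 : T.filter (fun x => ¬ x i = false) = T.filter (fun x => x i = true) := by
      ext x; simp [Bool.not_eq_false]
    rw [h2] at h1
    rw [hcardeq] at h1
    rw [← h1, ← two_mul] at hTodd
    simp [Nat.mul_mod_right] at hTodd
end

section
/- If a Hamiltonian cycle Boolean network f: {0,1}^n → {0,1}^n (n ≠ 2) is self-dual in [n] (f(¬x) = ¬f(x)), then its interaction graph is the complete digraph with loops K_n: for every pair (i,j) ∈ [n] × [n], f_j depends on x_i. -/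
lemma parity_flips (c : ℕ → Bool) :
    ∀ k, (Even (((Finset.range k).filter (fun t => c t ≠ c (t+1))).card)) ↔ c k = c 0 := by
  intro k
  induction k with
  | zero => simp
  | succ k ih =>
    rw [Finset.range_add_one, Finset.filter_insert]
    by_cases h : c k ≠ c (k+1)
    · rw [if_pos h, Finset.card_insert_of_notMem (by simp)]
      rw [Nat.even_add_one, ih]
      revert h; cases hk : c k <;> cases hk1 : c (k+1) <;> cases h0 : c 0 <;> simp
    · rw [if_neg h]
      push_neg at h
      rw [ih, h]

lemma even_card_invol {α : Type*} [DecidableEq α] (g : α → α) (s : Finset α)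
    (h1 : ∀ a ∈ s, g a ∈ s) (h2 : ∀ a ∈ s, g (g a) = a) (h3 : ∀ a ∈ s, g a ≠ a) :
    Even s.card := by
  induction s using Finset.strongInduction with
  | _ s ih =>
    rcases s.eq_empty_or_nonempty with rfl | ⟨a, ha⟩
    · simp
    · have hga : g a ∈ s.erase a := Finset.mem_erase.2 ⟨h3 a ha, h1 a ha⟩
      set s' := (s.erase a).erase (g a) with hs'
      have hsub : s' ⊆ s := fun b hb =>
        Finset.mem_of_mem_erase (Finset.mem_of_mem_erase hb)
      have hss : s' ⊂ s := Finset.ssubset_of_ssubset_of_subset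
        (Finset.erase_ssubset hga) (Finset.erase_subset _ _)
      have hmem' : ∀ b ∈ s', b ∈ s ∧ b ≠ a ∧ b ≠ g a := by
        intro b hb
        rw [hs', Finset.mem_erase, Finset.mem_erase] at hb
        exact ⟨hb.2.2, hb.2.1, hb.1⟩
      have key : Even s'.card := by
        apply ih s' hss
        · intro b hb
          obtain ⟨hbs, hba, hbg⟩ := hmem' b hb
          rw [hs', Finset.mem_erase, Finset.mem_erase]
          refine ⟨?_, ?_, h1 b hbs⟩
          · intro hgb; apply hba
            have := congrArg g hgb
            rw [h2 b hbs, h2 a ha] at this; exact this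
          · intro hgb; apply hbg
            have := congrArg g hgb
            rw [h2 b hbs] at this; exact this
        · intro b hb; exact h2 b (hmem' b hb).1
        · intro b hb; exact h3 b (hmem' b hb).1
      have hc2 : s'.card = s.card - 2 := by
        rw [hs', Finset.card_erase_of_mem hga, Finset.card_erase_of_mem ha]; omega
      have hcard2 : 2 ≤ s.card := by
        have := Finset.card_erase_of_mem ha
        have h1' : 1 ≤ (s.erase a).card := Finset.card_pos.2 ⟨g a, hga⟩
        omega
      obtain ⟨k, hk⟩ := key
      exact ⟨k + 1, by omega⟩


def negAll {n : ℕ} (x : Fin n → Bool) : Fin n → Bool := fun k => !(x k)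

private lemma main_thm {n : ℕ} (hn : n ≠ 2) (f : (Fin n → Bool) → (Fin n → Bool))
    (hham : ∀ x : Fin n → Bool, IsLeast {k : ℕ | 0 < k ∧ f^[k] x = x} (2 ^ n))
    (hsd : ∀ x : Fin n → Bool, f (fun k => !(x k)) = fun k => !(f x k)) :
    ∀ i j : Fin n, ∃ x : Fin n → Bool, f x j ≠ f (Function.update x i (!(x i))) j := by
  intro i j
  by_contra hcon
  push_neg at hcon
  have hnpos : 0 < n := i.pos
  obtain ⟨half, hhalfdef⟩ : ∃ h, h = 2 ^ (n - 1) := ⟨_, rfl⟩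
  have hNh : 2 ^ n = 2 * half := by
    rw [hhalfdef, ← pow_succ']
    congr 1; omega
  have hlb : ∀ (x : Fin n → Bool) (k : ℕ), 0 < k → f^[k] x = x → 2 ^ n ≤ k :=
    fun x k hk hfx => (hham x).2 ⟨hk, hfx⟩
  have hper : ∀ x : Fin n → Bool, f^[2 ^ n] x = x := fun x => (hham x).1.2
  set x0 : Fin n → Bool := fun _ => false with hx0
  set e : ℕ → (Fin n → Bool) := fun t => f^[t] x0 with he
  -- injectivity on [0, 2^n)
  have hinj : ∀ a b, a < 2 ^ n → b < 2 ^ n → e a = e b → a = b := by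
    have key : ∀ a b, a ≤ b → b < 2 ^ n → e a = e b → a = b := by
      intro a b hab hbN heq
      by_contra hne
      have hlt : a < b := lt_of_le_of_ne hab hne
      have h1 : f^[b - a + a] x0 = f^[b - a] (f^[a] x0) := Function.iterate_add_apply f _ _ x0
      have h2 : b - a + a = b := by omega
      rw [h2] at h1
      have key2 : f^[b - a] (e a) = e a := by
        show f^[b - a] (f^[a] x0) = e a
        rw [← h1]
        exact heq.symm
      have := hlb (e a) (b - a) (by omega) key2
      omega
    intro a b ha hb heq
    rcases le_total a b with h | h
    · exact key a b h hb heq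
    · exact (key b a h ha heq.symm).symm
  -- surjectivity
  have cardX : Fintype.card (Fin n → Bool) = 2 ^ n := by
    simp [Fintype.card_fun]
  have hsurj : ∀ y : Fin n → Bool, ∃ t, t < 2 ^ n ∧ e t = y := by
    have hgb : Function.Bijective (fun t : Fin (2 ^ n) => e t.1) := by
      rw [Fintype.bijective_iff_injective_and_card]
      constructor
      · intro a b hab
        exact Fin.ext (hinj a.1 b.1 a.2 b.2 hab)
      · simp [cardX]
    intro y
    obtain ⟨t, ht⟩ := hgb.2 y
    exact ⟨t.1, t.2, ht⟩
  -- self-duality iterated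
  have hsdI : ∀ (t : ℕ) (x : Fin n → Bool), f^[t] (fun k => !(x k)) = fun k => !(f^[t] x k) := by
    intro t
    induction t with
    | zero => intro x; simp
    | succ t ih =>
      intro x
      rw [Function.iterate_succ_apply', Function.iterate_succ_apply', ih, hsd]
  -- find s with e s = negAll x0
  obtain ⟨s, hsN, hes⟩ := hsurj (fun k => !(x0 k))
  have hspos : 0 < s := by
    rcases Nat.eq_zero_or_pos s with rfl | h
    · exfalso
      have := congrFun hes i
      simp [he, hx0] at this
    · exact h
  have h2s : f^[2 * s] x0 = x0 := by
    have h1 : f^[s + s] x0 = f^[s] (f^[s] x0) := Function.iterate_add_apply f s s x0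
    have h2 : (f^[s] x0) = fun k => !(x0 k) := hes
    rw [two_mul, h1, h2, hsdI s x0]
    funext k
    rw [congrFun h2 k]
    simp
  have hsN2 : 2 ^ n ≤ 2 * s := hlb x0 (2 * s) (by omega) h2s
  have hs_half : s = half := by
    by_contra hne
    have h2sN : 2 * half < 2 * s := by omega
    have hkey : f^[2 * s - 2 ^ n] x0 = x0 := by
      have h1 : f^[(2 * s - 2 ^ n) + 2 ^ n] x0 = f^[2 * s - 2 ^ n] (f^[2 ^ n] x0) :=
        Function.iterate_add_apply f _ _ x0
      rw [hper] at h1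
      rw [← h1, show 2 * s - 2 ^ n + 2 ^ n = 2 * s by omega]
      exact h2s
    have := hlb x0 (2 * s - 2 ^ n) (by omega) hkey
    omega
  have hfhx0 : (f^[half] x0) = fun k => !(x0 k) := by rw [← hs_half]; exact hes
  -- half iterate is negation
  have hhalf : ∀ x : Fin n → Bool, f^[half] x = fun k => !(x k) := by
    intro x
    obtain ⟨t, htN, rfl⟩ := hsurj x
    have h1 : f^[half] (e t) = f^[half + t] x0 := (Function.iterate_add_apply f half t x0).symm
    have h2 : f^[half + t] x0 = f^[t] (f^[half] x0) := by
      rw [Nat.add_comm]; exact Function.iterate_add_apply f t half x0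
    show f^[half] (e t) = _
    rw [h1, h2, hfhx0, hsdI]
  set c : ℕ → Bool := fun t => e t j with hc
  have hstep : ∀ t, e (t + 1) = f (e t) := by
    intro t; exact Function.iterate_succ_apply' f t x0
  have hcomp : ∀ t, c (t + half) = ! (c t) := by
    intro t
    have h1 : e (t + half) = f^[t] (f^[half] x0) := Function.iterate_add_apply f t half x0
    show e (t + half) j = !(e t j)
    rw [h1, hfhx0, hsdI]
  set m := ((Finset.range half).filter (fun t => c t ≠ c (t+1))).card with hm
  have hm_odd : ¬ Even m := by
    rw [hm, parity_flips c half]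
    have h0 : c half = ! (c 0) := by simpa using hcomp 0
    rw [h0]
    exact Bool.not_ne_self (c 0)
  set D : Finset (Fin n → Bool) := Finset.univ.filter (fun x => f x j ≠ x j) with hD
  have hmemD : ∀ x, x ∈ D ↔ f x j ≠ x j := by intro x; simp [hD]
  have hDflip : ((Finset.range (2^n)).filter (fun t => c t ≠ c (t+1))).card = D.card := by
    apply Finset.card_bij (fun t _ => e t)
    · intro t ht
      rw [Finset.mem_filter, Finset.mem_range] at ht
      rw [hmemD, ← hstep t]
      exact fun hh => ht.2 hh.symm
    · intro a ha b hb hab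
      rw [Finset.mem_filter, Finset.mem_range] at ha hb
      exact hinj a b ha.1 hb.1 hab
    · intro x hx
      obtain ⟨t, htN, rfl⟩ := hsurj x
      refine ⟨t, ?_, rfl⟩
      rw [Finset.mem_filter, Finset.mem_range]
      refine ⟨htN, fun hh => ?_⟩
      rw [hmemD, ← hstep t] at hx
      exact hx hh.symm
  have hsplit : ((Finset.range (2^n)).filter (fun t => c t ≠ c (t+1))).card = 2 * m := by
    have hIco : Finset.Ico 0 half ∪ Finset.Ico half (2*half) = Finset.range (2^n) := by
      rw [Finset.Ico_union_Ico_eq_Ico (Nat.zero_le _) (by omega), hNh, Finset.range_eq_Ico]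
    have hdisj : Disjoint ((Finset.Ico 0 half).filter (fun t => c t ≠ c (t+1)))
        ((Finset.Ico half (2*half)).filter (fun t => c t ≠ c (t+1))) :=
      Finset.disjoint_filter_filter (Finset.Ico_disjoint_Ico_consecutive 0 half (2*half))
    rw [← hIco, Finset.filter_union, Finset.card_union_of_disjoint hdisj]
    have hc1 : ((Finset.Ico 0 half).filter (fun t => c t ≠ c (t+1))).card = m := by
      rw [hm, Finset.range_eq_Ico]
    have hc2 : ((Finset.Ico half (2*half)).filter (fun t => c t ≠ c (t+1))).card = m := by
      rw [hm]
      symm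
      apply Finset.card_bij (fun t _ => t + half)
      · intro t ht
        rw [Finset.mem_filter, Finset.mem_range] at ht
        rw [Finset.mem_filter, Finset.mem_Ico]
        refine ⟨⟨by omega, by omega⟩, ?_⟩
        have e1 : c (t + half) = !(c t) := hcomp t
        have e2 : c (t + half + 1) = !(c (t+1)) := by
          rw [show t + half + 1 = (t+1) + half by omega]
          exact hcomp (t+1)
        rw [e1, e2]
        intro hh
        exact ht.2 (by simpa using hh)
      · intro a _ b _ hab; omega
      · intro u hu
        rw [Finset.mem_filter, Finset.mem_Ico] at hu
        refine ⟨u - half, ?_, by omega⟩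
        rw [Finset.mem_filter, Finset.mem_range]
        refine ⟨by omega, fun hh => ?_⟩
        have e1 : c (u - half + half) = !(c (u - half)) := hcomp (u - half)
        have e2 : c (u - half + 1 + half) = !(c (u - half + 1)) := hcomp (u - half + 1)
        rw [show u - half + half = u by omega] at e1
        rw [show u - half + 1 + half = u + 1 by omega] at e2
        apply hu.2
        rw [e1, e2, hh]
    rw [hc1, hc2]; ring
  have hDm : D.card = 2 * m := by rw [← hDflip, hsplit]
  -- properties of the flip map
  set φ : (Fin n → Bool) → (Fin n → Bool) := fun x => Function.update x i (!(x i)) with hφ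
  have hphi_i : ∀ x, φ x i = !(x i) := fun x => Function.update_self i _ x
  have hphi_ne : ∀ (x : Fin n → Bool) (k : Fin n), k ≠ i → φ x k = x k :=
    fun x k hk => Function.update_of_ne hk _ x
  have hphi_inv : ∀ x, φ (φ x) = x := by
    intro x
    funext k
    rcases eq_or_ne k i with rfl | hk
    · rw [hphi_i, hphi_i, Bool.not_not]
    · rw [hphi_ne _ _ hk, hphi_ne _ _ hk]
  have hconx : ∀ x, f (φ x) j = f x j := fun x => (hcon x).symm
  rcases eq_or_ne j i with hij | hij
  · -- diagonal case j = i
    have hDD : ∀ x, x ∈ D ↔ φ x ∉ D := by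
      intro x
      rw [hmemD, hmemD, hconx x]
      rw [hij, hphi_i]
      cases hfx : f x i <;> cases hx : x i <;> simp
    have hcompl : D.card = Dᶜ.card := by
      apply Finset.card_bij (fun x _ => φ x)
      · intro x hx
        exact Finset.mem_compl.2 ((hDD x).1 hx)
      · intro a _ b _ hab
        have := congrArg φ hab
        rwa [hphi_inv, hphi_inv] at this
      · intro y hy
        rw [Finset.mem_compl] at hy
        refine ⟨φ y, ?_, hphi_inv y⟩
        rw [hDD (φ y), hphi_inv]
        exact hy
    have hcards : D.card + Dᶜ.card = 2 ^ n := by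
      rw [Finset.card_add_card_compl, cardX]
    -- 2 * (2 * m) = 2 ^ n = 2 * half, so 2 * m = half
    have h2m : 2 * m = half := by omega
    rcases Nat.lt_or_ge n 2 with h | h
    · have hn1 : n = 1 := by omega
      rw [hn1] at hhalfdef
      norm_num at hhalfdef
      omega
    · have hn3 : 3 ≤ n := by omega
      have hps : half = 2 * 2 ^ (n - 2) := by
        rw [hhalfdef, ← pow_succ']
        congr 1; omega
      have hmeq : m = 2 ^ (n - 2) := by omega
      apply hm_odd
      rw [hmeq]
      exact (Nat.even_pow).mpr ⟨even_two, by omega⟩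
  · -- off-diagonal case j ≠ i
    have hDD : ∀ x, x ∈ D ↔ φ x ∈ D := by
      intro x
      rw [hmemD, hmemD, hconx x, hphi_ne _ _ hij]
    have hDneg : ∀ x, x ∈ D ↔ (fun k => !(x k)) ∈ D := by
      intro x
      rw [hmemD, hmemD]
      have h1 : f (fun k => !(x k)) j = !(f x j) := congrFun (hsd x) j
      rw [h1]
      cases hfx : f x j <;> cases hx : x j <;> simp
    set D0 := D.filter (fun x => x i = false) with hD0
    set D1 := D.filter (fun x => x i = true) with hD1
    have hsum : D0.card + D1.card = D.card := by
      rw [hD0, hD1]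
      have h := Finset.card_filter_add_card_filter_not
        (s := D) (p := fun x => x i = false)
      rw [← h]
      have hfc : (D.filter fun x => ¬ x i = false) = D.filter (fun x => x i = true) := by
        apply Finset.filter_congr
        intro x _
        simp
      rw [hfc]
    have heq01 : D0.card = D1.card := by
      apply Finset.card_bij (fun x _ => φ x)
      · intro x hx
        rw [hD0, Finset.mem_filter] at hx
        rw [hD1, Finset.mem_filter]
        exact ⟨(hDD x).1 hx.1, by simp [hphi_i, hx.2]⟩
      · intro a _ b _ hab
        have := congrArg φ hab
        rwa [hphi_inv, hphi_inv] at this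
      · intro y hy
        rw [hD1, Finset.mem_filter] at hy
        refine ⟨φ y, ?_, hphi_inv y⟩
        rw [hD0, Finset.mem_filter]
        refine ⟨(hDD (φ y)).2 ?_, by simp [hphi_i, hy.2]⟩
        rw [hphi_inv]
        exact hy.1
    have hevenD0 : Even D0.card := by
      apply even_card_invol (fun x => fun k => !(φ x k))
      · intro x hx
        rw [hD0, Finset.mem_filter] at hx ⊢
        refine ⟨(hDneg (φ x)).1 ((hDD x).1 hx.1), ?_⟩
        simp [hphi_i, hx.2]
      · intro x _
        funext k
        show (!(φ (fun k' => !(φ x k')) k)) = x k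
        by_cases hk : k = i
        · subst hk
          rw [hphi_i]
          show (!(!(!(φ x k)))) = x k
          rw [hphi_i, Bool.not_not, Bool.not_not]
        · rw [hphi_ne _ _ hk]
          show (!(!(φ x k))) = x k
          rw [Bool.not_not, hphi_ne _ _ hk]
      · intro x _ heq
        have h1 := congrFun heq j
        have h2 : (!(φ x j)) = x j := h1
        rw [hphi_ne _ _ hij] at h2
        exact Bool.not_ne_self (x j) h2
    rw [hDm] at hsum
    have hmeq : m = D0.card := by omega
    rw [hmeq] at hm_odd
    exact hm_odd hevenD0

/-- A Hamiltonian cycle Boolean network self-dual in `[n]` (n ≠ 2) has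
interaction graph `K_n` (all arcs, including loops). -/
theorem stmt10 {n : ℕ} (hn : n ≠ 2) (f : (Fin n → Bool) → (Fin n → Bool))
    (hham : ∀ x : Fin n → Bool, IsLeast {k : ℕ | 0 < k ∧ f^[k] x = x} (2 ^ n))
    (hsd : ∀ x : Fin n → Bool, f (negAll x) = negAll (f x)) :
    ∀ i j : Fin n, ∃ x : Fin n → Bool, f x j ≠ f (flipBit x i) j := by
  exact main_thm hn f hham hsd
end

section
/- Let f: {0,1}^n → {0,1}^n be a monotone Boolean network (each f_j is nondecreasing with respect to the componentwise partial order on {0,1}^n). Then for n ≥ 1, f is not a Hamiltonian cycle; in fact every limit cycle of f has length at most the binomial coefficient C(n, ⌊n/2⌋), which is strictly less than 2^n. -/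
private lemma fix_of_le {α : Type*} [PartialOrder α] {f : α → α} (hf : Monotone f)
    {y : α} {L d : ℕ} (hL : f^[L] y = y) (hLpos : 0 < L) (h : y ≤ f^[d] y) :
    f^[d] y = y := by
  have gm : Monotone (fun j => f^[j * d] y) := by
    apply monotone_nat_of_le_succ
    intro j
    have := (hf.iterate (j * d)) h
    simpa [Nat.succ_mul, Function.iterate_add_apply] using this
  have hgl : f^[L * d] y = y := by
    rw [Function.iterate_mul]
    exact Function.iterate_fixed hL d
  have h1 : f^[1 * d] y ≤ f^[L * d] y := gm (by omega)
  rw [one_mul, hgl] at h1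
  exact le_antisymm h1 h

private lemma fix_of_ge {α : Type*} [PartialOrder α] {f : α → α} (hf : Monotone f)
    {y : α} {L d : ℕ} (hL : f^[L] y = y) (hLpos : 0 < L) (h : f^[d] y ≤ y) :
    f^[d] y = y := by
  have gm : Antitone (fun j => f^[j * d] y) := by
    apply antitone_nat_of_succ_le
    intro j
    have := (hf.iterate (j * d)) h
    simpa [Nat.succ_mul, Function.iterate_add_apply] using this
  have hgl : f^[L * d] y = y := by
    rw [Function.iterate_mul]
    exact Function.iterate_fixed hL d
  have h1 : f^[L * d] y ≤ f^[1 * d] y := gm (by omega)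
  rw [one_mul, hgl] at h1
  exact le_antisymm h h1

/-- A monotone Boolean network is never a Hamiltonian cycle; moreover every
limit cycle has length at most `C(n, ⌊n/2⌋) < 2^n`. -/
theorem stmt12 {n : ℕ} (hn : 1 ≤ n) (f : (Fin n → Bool) → (Fin n → Bool))
    (hmono : ∀ x y : Fin n → Bool, x ≤ y → f x ≤ f y) :
    (¬ ∀ x : Fin n → Bool, IsLeast {k : ℕ | 0 < k ∧ f^[k] x = x} (2 ^ n)) ∧
    (∀ L : ℕ, 2 ≤ L →
      (∃ x : Fin n → Bool, IsLeast {k : ℕ | 0 < k ∧ f^[k] x = x} L) →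
      L ≤ n.choose (n / 2)) ∧
    n.choose (n / 2) < 2 ^ n := by
  have hf : Monotone f := fun a b h => hmono a b h
  have bound : n.choose (n / 2) < 2 ^ n := by
    rw [← Nat.sum_range_choose n]
    apply Finset.single_lt_sum (i := n / 2) (j := n)
    · omega
    · exact Finset.mem_range.2 (by omega)
    · exact Finset.mem_range.2 (by omega)
    · simp [Nat.choose_self]
    · intro k _ _; exact Nat.zero_le _
  have key : ∀ L : ℕ, 2 ≤ L →
      (∃ x : Fin n → Bool, IsLeast {k : ℕ | 0 < k ∧ f^[k] x = x} L) →
      L ≤ n.choose (n / 2) := by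
    intro L hL2 ⟨x, hmem, hmin⟩
    obtain ⟨hLpos, hfix⟩ := hmem
    -- minimality
    have hmin' : ∀ d : ℕ, 0 < d → f^[d] x = x → L ≤ d := fun d hd hfd => hmin ⟨hd, hfd⟩
    -- distinct orbit points are pairwise non-≤
    have incomp : ∀ k m : ℕ, k < L → m < L → k ≠ m → ¬ f^[k] x ≤ f^[m] x := by
      intro k m hk hm hne hle
      -- in both cases produce d with 0 < d < L and f^[d] x = x
      have main : ∀ a d : ℕ, 0 < d → a + d < L → f^[d] (f^[a] x) = f^[a] x → False := by
        intro a d hd had heq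
        have hdx : f^[d] x = x := by
          have h1 : f^[d + L] x = f^[d] x := by
            rw [Function.iterate_add_apply, hfix]
          have h2 : f^[d + L] x = x := by
            have : d + L = (L - a) + d + a := by omega
            rw [this, Function.iterate_add_apply, Function.iterate_add_apply, heq,
              ← Function.iterate_add_apply]
            have : L - a + a = L := by omega
            rw [this, hfix]
          rw [← h1, h2]
        have := hmin' d hd hdx
        omega
      have hLy : ∀ a : ℕ, f^[L] (f^[a] x) = f^[a] x := by
        intro a
        rw [← Function.iterate_add_apply, Nat.add_comm, Function.iterate_add_apply, hfix]
      rcases Nat.lt_or_ge k m with hkm | hmk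
      · -- k < m : y = f^[k] x ≤ f^[m-k] y
        have hle' : f^[k] x ≤ f^[m - k] (f^[k] x) := by
          rwa [← Function.iterate_add_apply, Nat.sub_add_cancel (le_of_lt hkm)]
        have := fix_of_le hf (hLy k) hLpos hle'
        exact main k (m - k) (by omega) (by omega) this
      · have hkm' : m < k := by omega
        have hle' : f^[k - m] (f^[m] x) ≤ f^[m] x := by
          rwa [← Function.iterate_add_apply, Nat.sub_add_cancel (le_of_lt hkm')]
        have := fix_of_ge hf (hLy m) hLpos hle'
        exact main m (k - m) (by omega) (by omega) this
    -- map to finsets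
    set T : (Fin n → Bool) → Finset (Fin n) := fun y => Finset.univ.filter (fun i => y i = true) with hT
    have Tsub : ∀ y z : Fin n → Bool, T y ⊆ T z → y ≤ z := by
      intro y z hsub i
      have : y i = true → z i = true := by
        intro hyi
        have := hsub (Finset.mem_filter.2 ⟨Finset.mem_univ i, hyi⟩)
        exact (Finset.mem_filter.1 this).2
      cases hyi : y i
      · exact Bool.false_le _
      · rw [this hyi]
    set A : Finset (Finset (Fin n)) := (Finset.range L).image (fun k => T (f^[k] x)) with hA
    have hcard : A.card = L := by
      rw [hA, Finset.card_image_of_injOn, Finset.card_range]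
      intro k hk m hm heq
      by_contra hne
      have h1 : f^[k] x ≤ f^[m] x := Tsub _ _ (le_of_eq heq)
      exact incomp k m (Finset.mem_range.1 hk) (Finset.mem_range.1 hm) hne h1
    have hanti : IsAntichain (· ⊆ ·) (A : Set (Finset (Fin n))) := by
      intro a ha b hb hne hsub
      simp only [hA, Finset.coe_image, Set.mem_image, Finset.mem_coe, Finset.mem_range] at ha hb
      obtain ⟨k, hk, rfl⟩ := ha
      obtain ⟨m, hm, rfl⟩ := hb
      have hne' : k ≠ m := by rintro rfl; exact hne rfl
      exact incomp k m hk hm hne' (Tsub _ _ hsub)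
    have := IsAntichain.sperner hanti
    simpa [hcard] using this
  refine ⟨?_, key, bound⟩
  intro h
  have h2 : 2 ≤ 2 ^ n := by
    calc 2 = 2 ^ 1 := rfl
    _ ≤ 2 ^ n := Nat.pow_le_pow_right (by norm_num) hn
  have := key (2 ^ n) h2 ⟨fun _ => false, h _⟩
  omega
end

section
/- Let f: {0,1}^n → {0,1}^n be a quasi-Hamiltonian Boolean network: its dynamics consist of one fixed point p and one cycle of length 2^n − 1 containing all other states. Then the interaction graph G(f) is strongly connected (provided n ≥ 2). -/
lemma inj_aux {α : Type*} (g : α → α) (y : α) (M : ℕ) (hM : g^[M] y = y)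
    (hmin : ∀ k, 0 < k → k < M → g^[k] y ≠ y) :
    Set.InjOn (fun t => g^[t] y) (Finset.range M) := by
  have main : ∀ a b, a < b → b < M → g^[a] y = g^[b] y → False := by
    intro a b hab hbM he
    apply hmin (M - b + a) (by omega) (by omega)
    have h1 : g^[M - b + a] y = g^[M - b] (g^[a] y) := Function.iterate_add_apply g _ _ y
    rw [h1, he, ← Function.iterate_add_apply, show M - b + b = M from by omega, hM]
  intro a ha b hb hab
  simp only [Finset.coe_range, Set.mem_Iio] at ha hb
  rcases lt_trichotomy a b with h | h | h
  · exact absurd hab (fun he => main a b h hb he)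
  · exact h
  · exact absurd hab.symm (fun he => main b a h ha he)

/-- A quasi-Hamiltonian Boolean network (one fixed point plus a cycle of length
`2^n - 1` through all other states) has a strongly connected interaction graph. -/
theorem stmt18 {n : ℕ} (hn : 2 ≤ n) (f : (Fin n → Bool) → (Fin n → Bool))
    (p : Fin n → Bool) (hp : f p = p)
    (hcyc : ∀ x : Fin n → Bool, x ≠ p →
      IsLeast {k : ℕ | 0 < k ∧ f^[k] x = x} (2 ^ n - 1)) :
    ∀ i j : Fin n, Relation.ReflTransGen (Dep f) i j := by
  classical
  by_contra hcon
  push_neg at hcon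
  obtain ⟨i₀, j₀, hij⟩ := hcon
  set P : Fin n → Prop := fun i => Relation.ReflTransGen (Dep f) i j₀ with hPdef
  have hPj : P j₀ := Relation.ReflTransGen.refl
  have hPi : ¬ P i₀ := hij
  -- no dependence of P-coordinates on non-P coordinates
  have hnodep : ∀ k i, ¬ P k → P i → ∀ x, f x i = f (flipBit x k) i := by
    intro k i hk hi x
    by_contra hne
    exact hk (Relation.ReflTransGen.head ⟨x, hne⟩ hi)
  -- invariance: f on P-coordinates depends only on P-coordinates
  have key : ∀ (D : Finset (Fin n)) (x x' : Fin n → Bool),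
      (∀ k, x k ≠ x' k → k ∈ D) → (∀ i, P i → x i = x' i) →
      ∀ i, P i → f x i = f x' i := by
    intro D
    induction D using Finset.induction_on with
    | empty =>
      intro x x' hD _ i _
      have hxx : x = x' := funext fun k => by
        by_contra h; exact absurd (hD k h) (Finset.notMem_empty k)
      rw [hxx]
    | @insert a D ha ih =>
      intro x x' hD hagree i hi
      by_cases hxa : x a = x' a
      · refine ih x x' (fun k hk => ?_) hagree i hi
        rcases Finset.mem_insert.mp (hD k hk) with h | h
        · exact absurd hxa (h ▸ hk)
        · exact h
      · have hPa : ¬ P a := fun h => hxa (hagree a h)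
        have h1 : f x i = f (flipBit x a) i := hnodep a i hPa hi x
        have h2 : f (flipBit x a) i = f x' i := by
          refine ih (flipBit x a) x' (fun k hk => ?_) (fun j hj => ?_) i hi
          · by_cases hka : k = a
            · subst hka
              exfalso
              apply hk
              have : flipBit x k k = !(x k) := by simp [flipBit]
              rw [this]
              cases hxk : x k <;> cases hxk' : x' k <;> simp_all
            · have hk' : x k ≠ x' k := by
                have : flipBit x a k = x k := by simp [flipBit, Function.update, hka]
                rwa [this] at hk
              rcases Finset.mem_insert.mp (hD k hk') with h | h
              · exact absurd h hka
              · exact h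
          · have hja : j ≠ a := fun h => hPa (h ▸ hj)
            have : flipBit x a j = x j := by simp [flipBit, Function.update, hja]
            rw [this]; exact hagree j hj
        rw [h1, h2]
  have keyU : ∀ (x x' : Fin n → Bool), (∀ i, P i → x i = x' i) →
      ∀ i, P i → f x i = f x' i :=
    fun x x' h => key Finset.univ x x' (fun k _ => Finset.mem_univ k) h
  set N := 2 ^ n - 1 with hNdef
  have h2n : 4 ≤ 2 ^ n := by
    calc (4:ℕ) = 2 ^ 2 := rfl
    _ ≤ 2 ^ n := Nat.pow_le_pow_right (by norm_num) hn
  have hNpos : 0 < N := by omega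
  have hNodd : ¬ 2 ∣ N := by
    intro hd
    have h2 : 2 ∣ 2 ^ n := dvd_pow_self 2 (by omega)
    obtain ⟨c, hc⟩ := hd
    obtain ⟨e, he⟩ := h2
    omega
  set x₀ := flipBit p j₀ with hx0def
  have hx₀ : x₀ ≠ p := by
    intro h
    have h' := congrFun h j₀
    have : x₀ j₀ = !(p j₀) := by rw [hx0def]; simp [flipBit]
    rw [this] at h'
    exact absurd h' (Bool.not_ne_self _)
  have hper : f^[N] x₀ = x₀ := (hcyc x₀ hx₀).1.2
  have hleast : ∀ k, 0 < k → f^[k] x₀ = x₀ → N ≤ k :=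
    fun k h1 h2 => (hcyc x₀ hx₀).2 ⟨h1, h2⟩
  have hmulN : ∀ c, f^[N * c] x₀ = x₀ := by
    intro c
    rw [Function.iterate_mul]
    exact Function.iterate_fixed hper c
  have hnp : ∀ t, f^[t] x₀ ≠ p := by
    intro t h
    have hle : t ≤ N * (t + 1) := by nlinarith
    have : f^[N * (t+1)] x₀ = p := by
      rw [show N * (t+1) = (N * (t+1) - t) + t from by omega,
        Function.iterate_add_apply, h]
      exact Function.iterate_fixed hp _
    rw [hmulN (t+1)] at this
    exact hx₀ this
  have hinj : Set.InjOn (fun t => f^[t] x₀) (Finset.range N) :=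
    inj_aux f x₀ N hper (fun k h1 h2 he => by have := hleast k h1 he; omega)
  have horb : ∀ z : Fin n → Bool, z ≠ p → ∃ t < N, f^[t] x₀ = z := by
    intro z hz
    set O := (Finset.range N).image (fun t => f^[t] x₀) with hO
    have hcard : O.card = N := by
      rw [hO, Finset.card_image_of_injOn hinj, Finset.card_range]
    have hsub : O ⊆ Finset.univ.erase p := by
      intro y hy
      rw [hO] at hy
      simp only [Finset.mem_image, Finset.mem_range] at hy
      obtain ⟨t, _, ht⟩ := hy
      exact Finset.mem_erase.mpr ⟨ht ▸ hnp t, Finset.mem_univ y⟩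
    have hcard2 : (Finset.univ.erase p).card = N := by
      rw [Finset.card_erase_of_mem (Finset.mem_univ p), Finset.card_univ]
      simp [hNdef]
    have heq : O = Finset.univ.erase p :=
      Finset.eq_of_subset_of_card_le hsub (by omega)
    have hz' : z ∈ O := heq ▸ Finset.mem_erase.mpr ⟨hz, Finset.mem_univ z⟩
    rw [hO] at hz'
    simp only [Finset.mem_image, Finset.mem_range] at hz'
    obtain ⟨t, ht1, ht2⟩ := hz'
    exact ⟨t, ht1, ht2⟩
  -- the retraction and quotient dynamics
  set r : (Fin n → Bool) → (Fin n → Bool) := fun x i => if P i then x i else p i with hrdef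
  have hrP : ∀ x i, P i → r x i = x i := by intro x i hi; simp [hrdef, hi]
  have hrr : ∀ x, r (r x) = r x := by
    intro x; funext i; by_cases h : P i <;> simp [hrdef, h]
  set g : (Fin n → Bool) → (Fin n → Bool) := fun y => r (f y) with hgdef
  have hsemi : ∀ x, r (f x) = g (r x) := by
    intro x
    rw [hgdef]
    show r (f x) = r (f (r x))
    funext i
    by_cases hi : P i
    · rw [hrP _ i hi, hrP _ i hi]
      exact keyU x (r x) (fun j hj => (hrP x j hj).symm) i hi
    · simp [hrdef, hi]
  have hiter : ∀ k x, r (f^[k] x) = g^[k] (r x) := by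
    intro k
    induction k with
    | zero => intro x; simp
    | succ k ih =>
      intro x
      rw [Function.iterate_succ_apply', Function.iterate_succ_apply', hsemi, ih]
  set y₀ := r x₀ with hy0def
  have hgN : g^[N] y₀ = y₀ := by rw [hy0def, ← hiter, hper]
  set S : Finset (Fin n → Bool) := Finset.univ.filter (fun y => r y = y) with hSdef
  have hTS : ∀ t, g^[t] y₀ ∈ S := by
    intro t
    rw [hSdef, Finset.mem_filter]
    refine ⟨Finset.mem_univ _, ?_⟩
    rw [hy0def, ← hiter, hrr]
  have hST : ∀ y ∈ S, ∃ t < N, g^[t] y₀ = y := by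
    intro y hy
    have hyr : r y = y := (Finset.mem_filter.mp hy).2
    have hflip : r (flipBit y i₀) = y := by
      funext i
      by_cases hi : P i
      · have hii : i ≠ i₀ := fun h => hPi (h ▸ hi)
        have h1 : flipBit y i₀ i = y i := by simp [flipBit, Function.update, hii]
        rw [hrP _ i hi, h1, ← hyr, hrP _ i hi]
      · simp only [hrdef, hi, if_false]
        rw [← hyr]; simp [hrdef, hi]
    have hz : ∃ z, z ≠ p ∧ r z = y := by
      by_cases h : y = p
      · refine ⟨flipBit y i₀, ?_, hflip⟩
        intro hc
        have h' := congrFun hc i₀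
        have : flipBit y i₀ i₀ = !(y i₀) := by simp [flipBit]
        rw [this, ← h] at h'
        exact absurd h' (Bool.not_ne_self _)
      · exact ⟨y, h, hyr⟩
    obtain ⟨z, hz1, hz2⟩ := hz
    obtain ⟨t, ht, hzt⟩ := horb z hz1
    exact ⟨t, ht, by rw [hy0def, ← hiter, hzt, hz2]⟩
  -- least period of y₀ under g
  have hex : ∃ k, 0 < k ∧ g^[k] y₀ = y₀ := ⟨N, hNpos, hgN⟩
  set d := Nat.find hex with hddef
  obtain ⟨hdpos, hgd⟩ : 0 < d ∧ g^[d] y₀ = y₀ := Nat.find_spec hex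
  have hdmin : ∀ k, 0 < k → k < d → g^[k] y₀ ≠ y₀ := by
    intro k h1 h2 h3
    exact Nat.find_min hex h2 ⟨h1, h3⟩
  have hmuld : ∀ c, g^[d * c] y₀ = y₀ := by
    intro c
    rw [Function.iterate_mul]
    exact Function.iterate_fixed hgd c
  have hmod : ∀ t, g^[t] y₀ = g^[t % d] y₀ := by
    intro t
    conv_lhs => rw [show t = t % d + d * (t / d) from (Nat.mod_add_div t d).symm]
    rw [Function.iterate_add_apply, hmuld]
  have hdN : d ∣ N := by
    by_contra h
    have h1 : N % d ≠ 0 := fun h0 => h (Nat.dvd_of_mod_eq_zero h0)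
    exact hdmin (N % d) (Nat.pos_of_ne_zero h1) (Nat.mod_lt _ hdpos)
      (by rw [← hmod]; exact hgN)
  have hdinj : Set.InjOn (fun t => g^[t] y₀) (Finset.range d) :=
    inj_aux g y₀ d hgd hdmin
  have hScard : S.card = d := by
    have hSeq : S = (Finset.range d).image (fun t => g^[t] y₀) := by
      apply Finset.Subset.antisymm
      · intro y hy
        obtain ⟨t, _, hty⟩ := hST y hy
        simp only [Finset.mem_image, Finset.mem_range]
        exact ⟨t % d, Nat.mod_lt _ hdpos, by rw [← hmod, hty]⟩
      · intro y hy
        simp only [Finset.mem_image, Finset.mem_range] at hy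
        obtain ⟨t, _, ht⟩ := hy
        rw [← ht]
        exact hTS t
    rw [hSeq, Finset.card_image_of_injOn hdinj, Finset.card_range]
  -- S has even cardinality via the fixed-point-free involution flipBit · j₀
  have hflipS : ∀ y, r y = y → r (flipBit y j₀) = flipBit y j₀ := by
    intro y hy
    funext i
    by_cases hi : P i
    · exact hrP _ i hi
    · have hij' : i ≠ j₀ := fun h => hi (h ▸ hPj)
      have h1 : flipBit y j₀ i = y i := by simp [flipBit, Function.update, hij']
      simp only [hrdef, hi, if_false]
      rw [h1, ← hy]
      simp [hrdef, hi]
  have hflipflip : ∀ y : Fin n → Bool, flipBit (flipBit y j₀) j₀ = y := by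
    intro y
    funext i
    by_cases hi : i = j₀
    · subst hi; simp [flipBit]
    · simp [flipBit, Function.update, hi]
  have hSeven : 2 ∣ S.card := by
    set A := S.filter (fun y => y j₀ = true) with hA
    set B := S.filter (fun y => y j₀ = false) with hB
    have hcardAB : A.card = B.card := by
      apply Finset.card_bij' (fun y _ => flipBit y j₀) (fun y _ => flipBit y j₀)
      · intro y hy
        rw [hA, Finset.mem_filter] at hy
        rw [hB, Finset.mem_filter]
        refine ⟨?_, ?_⟩
        · rw [hSdef, Finset.mem_filter]
          exact ⟨Finset.mem_univ _, hflipS y ((Finset.mem_filter.mp hy.1).2)⟩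
        · have : flipBit y j₀ j₀ = !(y j₀) := by simp [flipBit]
          rw [this, hy.2]; rfl
      · intro y hy
        rw [hB, Finset.mem_filter] at hy
        rw [hA, Finset.mem_filter]
        refine ⟨?_, ?_⟩
        · rw [hSdef, Finset.mem_filter]
          exact ⟨Finset.mem_univ _, hflipS y ((Finset.mem_filter.mp hy.1).2)⟩
        · have : flipBit y j₀ j₀ = !(y j₀) := by simp [flipBit]
          rw [this, hy.2]; rfl
      · intro y _; exact hflipflip y
      · intro y _; exact hflipflip y
    have hsplit : A.card + (S.filter (fun y => ¬ (y j₀ = true))).card = S.card :=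
      Finset.card_filter_add_card_filter_not _
    have hBeq : S.filter (fun y => ¬ (y j₀ = true)) = B := by
      apply Finset.filter_congr
      intro y _
      simp [Bool.not_eq_true]
    rw [hBeq] at hsplit
    exact ⟨A.card, by omega⟩
  rw [hScard] at hSeven
  exact hNodd (dvd_trans hSeven hdN)
end
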